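/- Let ψ : ℝ → [0,∞) be even, nonincreasing on [0,∞), and locally integrable, and set Ψ(r) := ∫₀^r ψ(s) ds. Let a, b, z ∈ ℝ with a > b, and let D ≥ 0 satisfy |a − z| ≤ D and |b − z| ≤ D. Then Ψ(a − z) − Ψ(b − z) ≥ ψ(D)·(a − b), and Ψ(a − z) − Ψ(b − z) ≤ 2·Ψ((a − b)/2). -/
import Mathlib

open MeasureTheory intervalIntegral

private lemma psi_abs (ψ : ℝ → ℝ) (hψ_even : ∀ s : ℝ, ψ (-s) = ψ s) (x : ℝ) :
    ψ x = ψ |x| := by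
  rcases abs_cases x with ⟨h, _⟩ | ⟨h, _⟩
  · rw [h]
  · rw [h, hψ_even]

private lemma psi_mono_abs (ψ : ℝ → ℝ) (hψ_even : ∀ s : ℝ, ψ (-s) = ψ s)
    (hψ_anti : ∀ ⦃s t : ℝ⦄, 0 ≤ s → s ≤ t → ψ t ≤ ψ s)
    {x y : ℝ} (h : |x| ≤ |y|) : ψ y ≤ ψ x := by
  rw [psi_abs ψ hψ_even x, psi_abs ψ hψ_even y]
  exact hψ_anti (abs_nonneg x) h

private lemma rearr0 (ψ : ℝ → ℝ)
    (hψ_even : ∀ s : ℝ, ψ (-s) = ψ s)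
    (hψ_anti : ∀ ⦃s t : ℝ⦄, 0 ≤ s → s ≤ t → ψ t ≤ ψ s)
    (hψ_loc : LocallyIntegrable ψ)
    (L : ℝ) (hL : 0 ≤ L) (m : ℝ) (hm : 0 ≤ m) :
    (∫ s in (m - L)..(m + L), ψ s) ≤ ∫ s in (-L)..L, ψ s := by
  have hint : ∀ u v : ℝ, IntervalIntegrable ψ volume u v := fun u v =>
    intervalIntegrable_iff.mpr
      ((hψ_loc.integrableOn_isCompact isCompact_uIcc).mono_set Set.uIoc_subset_uIcc)
  have e1 : L - 2 * L = -L := by ring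
  have e2 : m + L - 2 * L = m - L := by ring
  have hsub : (∫ s in L..(m + L), ψ (s - 2 * L)) = ∫ s in (-L)..(m - L), ψ s := by
    rw [intervalIntegral.integral_comp_sub_right ψ (2 * L), e1, e2]
  have hmono : (∫ s in L..(m + L), ψ s) ≤ ∫ s in L..(m + L), ψ (s - 2 * L) := by
    apply intervalIntegral.integral_mono_on (by linarith) (hint _ _)
    · have h := (hint (-L) (m - L)).comp_sub_right (2 * L)
      have e3 : -L + 2 * L = L := by ring
      have e4 : m - L + 2 * L = m + L := by ring
      rwa [e3, e4] at h
    · intro s hs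
      apply psi_mono_abs ψ hψ_even hψ_anti
      rw [abs_of_nonneg (by linarith [hs.1] : (0:ℝ) ≤ s)]
      rw [abs_le]
      constructor <;> [linarith [hs.1]; linarith [hs.1]]
  have h1 : (∫ s in (m - L)..(m + L), ψ s)
      = (∫ s in (m - L)..L, ψ s) + ∫ s in L..(m + L), ψ s :=
    (intervalIntegral.integral_add_adjacent_intervals (hint _ _) (hint _ _)).symm
  have h2 : (∫ s in (-L)..L, ψ s)
      = (∫ s in (-L)..(m - L), ψ s) + ∫ s in (m - L)..L, ψ s :=
    (intervalIntegral.integral_add_adjacent_intervals (hint _ _) (hint _ _)).symm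
  rw [h1, h2, ← hsub]
  linarith

private lemma rearr (ψ : ℝ → ℝ)
    (hψ_even : ∀ s : ℝ, ψ (-s) = ψ s)
    (hψ_anti : ∀ ⦃s t : ℝ⦄, 0 ≤ s → s ≤ t → ψ t ≤ ψ s)
    (hψ_loc : LocallyIntegrable ψ)
    (L : ℝ) (hL : 0 ≤ L) (m : ℝ) :
    (∫ s in (m - L)..(m + L), ψ s) ≤ ∫ s in (-L)..L, ψ s := by
  rcases le_total 0 m with hm | hm
  · exact rearr0 ψ hψ_even hψ_anti hψ_loc L hL m hm
  · have hrefl : (∫ s in (m - L)..(m + L), ψ s) = ∫ s in (-m - L)..(-m + L), ψ s := by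
      have h := intervalIntegral.integral_comp_neg (a := -m - L) (b := -m + L) ψ
      simp only [hψ_even] at h
      have e1 : -(-m + L) = m - L := by ring
      have e2 : -(-m - L) = m + L := by ring
      rw [e1, e2] at h
      exact h.symm
    rw [hrefl]
    exact rearr0 ψ hψ_even hψ_anti hψ_loc L hL (-m) (by linarith)

theorem stmt_0 (ψ : ℝ → ℝ)
    (hψ_nonneg : ∀ s : ℝ, 0 ≤ ψ s)
    (hψ_even : ∀ s : ℝ, ψ (-s) = ψ s)
    (hψ_anti : ∀ ⦃s t : ℝ⦄, 0 ≤ s → s ≤ t → ψ t ≤ ψ s)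
    (hψ_loc : LocallyIntegrable ψ)
    (Ψ : ℝ → ℝ) (hΨ : ∀ r : ℝ, Ψ r = ∫ s in (0:ℝ)..r, ψ s)
    (a b z D : ℝ) (hab : a > b) (hD : 0 ≤ D)
    (haz : |a - z| ≤ D) (hbz : |b - z| ≤ D) :
    ψ D * (a - b) ≤ Ψ (a - z) - Ψ (b - z) ∧
      Ψ (a - z) - Ψ (b - z) ≤ 2 * Ψ ((a - b) / 2) := by
  have hint : ∀ u v : ℝ, IntervalIntegrable ψ volume u v := fun u v =>
    intervalIntegrable_iff.mpr
      ((hψ_loc.integrableOn_isCompact isCompact_uIcc).mono_set Set.uIoc_subset_uIcc)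
  have haz' := abs_le.mp haz
  have hbz' := abs_le.mp hbz
  have hkey : Ψ (a - z) - Ψ (b - z) = ∫ s in (b - z)..(a - z), ψ s := by
    rw [hΨ, hΨ]
    exact intervalIntegral.integral_interval_sub_left (hint _ _) (hint _ _)
  constructor
  · rw [hkey]
    have hlow : (∫ s in (b - z)..(a - z), (fun _ => ψ D) s)
        ≤ ∫ s in (b - z)..(a - z), ψ s := by
      apply intervalIntegral.integral_mono_on (by linarith) (by simp) (hint _ _)
      intro s hs
      apply psi_mono_abs ψ hψ_even hψ_anti
      rw [abs_of_nonneg hD, abs_le]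
      exact ⟨by linarith [hs.1, hbz'.1], by linarith [hs.2, haz'.2]⟩
    simpa [mul_comm] using hlow
  · rw [hkey]
    set L : ℝ := (a - b) / 2 with hLdef
    have hL : 0 ≤ L := by simp [hLdef]; linarith
    set m : ℝ := ((b - z) + (a - z)) / 2 with hmdef
    have hbz2 : b - z = m - L := by rw [hmdef, hLdef]; ring
    have haz2 : a - z = m + L := by rw [hmdef, hLdef]; ring
    rw [hbz2, haz2]
    have h1 := rearr ψ hψ_even hψ_anti hψ_loc L hL m
    have h2 : (∫ s in (-L)..L, ψ s) = 2 * Ψ L := by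
      have hchasles : (∫ s in (-L)..L, ψ s)
          = (∫ s in (-L)..(0:ℝ), ψ s) + ∫ s in (0:ℝ)..L, ψ s :=
        (intervalIntegral.integral_add_adjacent_intervals (hint _ _) (hint _ _)).symm
      have hneg : (∫ s in (-L)..(0:ℝ), ψ s) = ∫ s in (0:ℝ)..L, ψ s := by
        have : (∫ s in (0:ℝ)..L, ψ (-s)) = ∫ s in (-L)..(0:ℝ), ψ s := by
          rw [intervalIntegral.integral_comp_neg ψ]
          norm_num
        simp only [hψ_even] at this
        rw [← this]
      rw [hchasles, hneg, hΨ]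
      ring
    rw [hLdef] at h2 ⊢
    linarith
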